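/- Let h : 𝔻 → ℂ be real-analytic on the unit disk with |h(z)| = o(|z|^N) as z → 0, N ≥ 2. Then there is a radius r > 0 and a function w : 𝔻_r → ℂ with w(z)^N = z^N + h(z) for |z| < r, satisfying w(z) = z + o(|z|) as z → 0; moreover w is injective near 0 and its inverse satisfies z = w + o(|w|). -/

import Mathlib

open Real Asymptotics

open Filter


lemma pow_sub_pow_norm_le (a b : ℂ) (hab : ‖a‖ ≤ ‖b‖) :
    ∀ i : ℕ, ‖a ^ i - b ^ i‖ ≤ i * ‖b‖ ^ (i - 1) * ‖a - b‖ := by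
  intro i
  induction i with
  | zero => simp
  | succ j IH =>
    have hid : a ^ (j+1) - b ^ (j+1) = a * (a ^ j - b ^ j) + (a - b) * b ^ j := by ring
    rw [hid]
    have h1 : ‖a * (a ^ j - b ^ j)‖ ≤ ‖b‖ * (j * ‖b‖ ^ (j - 1) * ‖a - b‖) := by
      rw [norm_mul]
      exact mul_le_mul hab IH (norm_nonneg _) (norm_nonneg _)
    have h2 : ‖(a - b) * b ^ j‖ = ‖a - b‖ * ‖b‖ ^ j := by
      rw [norm_mul, norm_pow]
    have h3 : ‖b‖ * (j * ‖b‖ ^ (j - 1) * ‖a - b‖) ≤ j * ‖b‖ ^ j * ‖a - b‖ := by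
      rcases Nat.eq_zero_or_pos j with hj | hj
      · subst hj; simp
      · have : ‖b‖ * ‖b‖ ^ (j - 1) = ‖b‖ ^ j := by
          rw [← pow_succ']
          congr 1
          omega
        have e : ‖b‖ * ((j:ℝ) * ‖b‖ ^ (j - 1) * ‖a - b‖) = (j : ℝ) * (‖b‖ * ‖b‖ ^ (j-1)) * ‖a - b‖ := by
          ring
        rw [e, this]

    calc ‖a * (a ^ j - b ^ j) + (a - b) * b ^ j‖
        ≤ ‖a * (a ^ j - b ^ j)‖ + ‖(a - b) * b ^ j‖ := norm_add_le _ _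
      _ ≤ j * ‖b‖ ^ j * ‖a - b‖ + ‖a - b‖ * ‖b‖ ^ j := by
          rw [h2]; linarith [h1.trans h3]
      _ ≤ (j + 1 : ℕ) * ‖b‖ ^ ((j + 1) - 1) * ‖a - b‖ := by
          have e : (j + 1) - 1 = j := by omega
          rw [e]
          push_cast
          nlinarith [norm_nonneg (a-b), pow_nonneg (norm_nonneg b) j]

lemma diag_vanish {h : ℂ → ℂ} {p : FormalMultilinearSeries ℝ ℂ ℂ}
    (hp : HasFPowerSeriesAt h p 0) {N : ℕ}
    (ho : h =o[nhds (0 : ℂ)] fun z : ℂ => z ^ N) :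
    ∀ k, k ≤ N → ∀ z : ℂ, p k (fun _ => z) = 0 := by
  intro k
  induction k using Nat.strong_induction_on with
  | _ k IH =>
    intro hk z
    -- step 1: h =o ‖y‖^k
    have hok : h =o[nhds (0:ℂ)] fun y : ℂ => ‖y‖ ^ k := by
      refine ho.trans_isBigO ?_
      rw [isBigO_iff]
      refine ⟨1, ?_⟩
      filter_upwards [Metric.ball_mem_nhds (0:ℂ) one_pos] with y hy
      rw [Metric.mem_ball, dist_zero_right] at hy
      rw [norm_pow, one_mul, Real.norm_eq_abs, abs_of_nonneg (pow_nonneg (norm_nonneg _) _)]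
      exact pow_le_pow_of_le_one (norm_nonneg _) hy.le hk
    -- step 2: ‖y‖^(k+1) =o ‖y‖^k
    have hpow : (fun y : ℂ => ‖y‖ ^ (k+1)) =o[nhds (0:ℂ)] fun y : ℂ => ‖y‖ ^ k := by
      rw [isLittleO_iff]
      intro c hc
      filter_upwards [Metric.ball_mem_nhds (0:ℂ) hc] with y hy
      rw [Metric.mem_ball, dist_zero_right] at hy
      rw [Real.norm_eq_abs, Real.norm_eq_abs, abs_of_nonneg (pow_nonneg (norm_nonneg _) _),
        abs_of_nonneg (pow_nonneg (norm_nonneg _) _), pow_succ]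
      calc ‖y‖ ^ k * ‖y‖ ≤ ‖y‖ ^ k * c := by
            exact mul_le_mul_of_nonneg_left hy.le (pow_nonneg (norm_nonneg _) _)
        _ = c * ‖y‖ ^ k := by ring
    -- step 3: partial sum rewrite
    have hbig := hp.isBigO_sub_partialSum_pow (k+1)
    have hps : ∀ y : ℂ, p.partialSum (k+1) y = p k (fun _ => y) := by
      intro y
      rw [FormalMultilinearSeries.partialSum]
      refine Finset.sum_eq_single_of_mem k (Finset.self_mem_range_succ k) ?_
      intro j hj hjk
      have hjlt : j < k := by
        have := Finset.mem_range.1 hj; omega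
      exact IH j hjlt (le_of_lt (lt_of_lt_of_le hjlt hk)) y
    have hbig' : (fun y : ℂ => h y - p k (fun _ => y)) =o[nhds (0:ℂ)]
        fun y : ℂ => ‖y‖ ^ k := by
      refine IsBigO.trans_isLittleO ?_ hpow
      have : (fun y : ℂ => h y - p k (fun _ => y))
          = fun y : ℂ => h (0 + y) - p.partialSum (k+1) y := by
        funext y; rw [zero_add, hps y]
      rw [this]
      exact hbig
    have hG : (fun y : ℂ => p k (fun _ => y)) =o[nhds (0:ℂ)] fun y : ℂ => ‖y‖ ^ k := by
      have := hok.sub hbig'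
      simpa using this
    -- step 4: scaling
    have hle : ∀ ε : ℝ, 0 < ε → ‖p k (fun _ => z)‖ ≤ ε * ‖z‖ ^ k := by
      intro ε hε
      rcases Metric.eventually_nhds_iff.1 (hG.def hε) with ⟨δ, hδ0, hδ⟩
      set t : ℝ := δ / (2 * (‖z‖ + 1)) with ht
      have hz1 : 0 < ‖z‖ + 1 := by positivity
      have ht0 : 0 < t := by positivity
      have htz : dist (t • z) (0:ℂ) < δ := by
        rw [dist_zero_right, norm_smul, Real.norm_eq_abs, abs_of_pos ht0]
        calc t * ‖z‖ < t * (‖z‖ + 1) := by nlinarith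
          _ = δ / 2 := by rw [ht]; field_simp
          _ < δ := by linarith
      have hb := hδ htz
      have hsc : p k (fun _ => t • z) = (t ^ k) • p k (fun _ => z) := by
        have := (p k).map_smul_univ (fun _ : Fin k => t) (fun _ : Fin k => z)
        simpa [Finset.prod_const] using this
      rw [hsc, norm_smul, Real.norm_eq_abs, abs_of_pos (pow_pos ht0 k)] at hb
      rw [Real.norm_eq_abs, abs_of_nonneg (pow_nonneg (norm_nonneg _) _), norm_smul,
        Real.norm_eq_abs, abs_of_pos ht0, mul_pow] at hb
      have htk : 0 < t ^ k := pow_pos ht0 k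
      calc ‖p k (fun _ => z)‖ = (t ^ k * ‖p k (fun _ => z)‖) / t ^ k := by
            field_simp
        _ ≤ (ε * (t ^ k * ‖z‖ ^ k)) / t ^ k := by
            gcongr
        _ = ε * ‖z‖ ^ k := by field_simp
    have : ‖p k (fun _ => z)‖ ≤ 0 := by
      refine le_of_forall_pos_le_add ?_
      intro ε hε
      have hzk : (0:ℝ) ≤ ‖z‖ ^ k := pow_nonneg (norm_nonneg _) _
      have := hle (ε / (‖z‖ ^ k + 1)) (by positivity)
      have h2 : ε / (‖z‖ ^ k + 1) * ‖z‖ ^ k ≤ ε := by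
        rw [div_mul_eq_mul_div, div_le_iff₀ (by positivity)]
        nlinarith
      linarith
    simpa using norm_le_zero_iff.1 this

lemma lip_bound {h : ℂ → ℂ} {p : FormalMultilinearSeries ℝ ℂ ℂ} {ρ : ENNReal}
    (hp : HasFPowerSeriesOnBall h p 0 ρ) {r₀ : NNReal} (hr₀ : 0 < r₀)
    (hlt : (r₀ : ENNReal) < ρ) {N : ℕ}
    (hvan : ∀ k, k ≤ N → ∀ z : ℂ, p k (fun _ => z) = 0) :
    ∃ C : ℝ, 0 ≤ C ∧ ∀ a b : ℂ, ‖a‖ < (r₀:ℝ)/2 → ‖b‖ < (r₀:ℝ)/2 →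
      ‖h a - h b‖ ≤ C * max ‖a‖ ‖b‖ ^ N * ‖a - b‖ := by
  obtain ⟨C, hC, hcoef⟩ := p.norm_le_div_pow_of_pos_of_lt_radius hr₀ (hlt.trans_le hp.r_le)
  have hr0R : (0:ℝ) < (r₀:ℝ) := hr₀
  -- the geometric-type sum
  have hsummable : Summable (fun j : ℕ => (j:ℝ) * (1/2)^j) := by
    have := summable_pow_mul_geometric_of_norm_lt_one (R := ℝ) 1 (r := 1/2) (by norm_num)
    simpa using this
  set S : ℝ := ∑' j : ℕ, (j:ℝ) * (1/2)^j with hS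
  have hS0 : 0 ≤ S := tsum_nonneg (fun j => by positivity)
  refine ⟨C * 2^(N+1) / (r₀:ℝ)^(N+1) * S, by positivity, ?_⟩
  intro a b ha hb
  set m := max ‖a‖ ‖b‖ with hm
  have hm0 : 0 ≤ m := le_max_of_le_left (norm_nonneg _)
  have hmlt : m < (r₀:ℝ)/2 := max_lt ha hb
  -- HasSum for a and b
  have hmem : ∀ c : ℂ, ‖c‖ < (r₀:ℝ)/2 → c ∈ Metric.eball (0:ℂ) ρ := by
    intro c hc
    rw [Metric.mem_eball, edist_zero_right]
    have h1 : ‖c‖₊ < r₀ := by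
      rw [← NNReal.coe_lt_coe]
      calc (‖c‖₊ : ℝ) = ‖c‖ := rfl
        _ < (r₀:ℝ)/2 := hc
        _ ≤ (r₀:ℝ) := by linarith
    calc (‖c‖₊ : ENNReal) < (r₀ : ENNReal) := by exact_mod_cast h1
      _ < ρ := hlt
  have hsa := hp.hasSum (hmem a ha)
  have hsb := hp.hasSum (hmem b hb)
  rw [zero_add] at hsa hsb
  have hsd : HasSum (fun j : ℕ => p j (fun _ => a) - p j (fun _ => b)) (h a - h b) :=
    hsa.sub hsb
  -- termwise bound
  set K : ℝ := C * 2^(N+1) / (r₀:ℝ)^(N+1) * (m ^ N * ‖a - b‖) with hK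
  have hK0 : 0 ≤ K := by positivity
  have hterm : ∀ j : ℕ, ‖p j (fun _ => a) - p j (fun _ => b)‖ ≤ K * ((j:ℝ) * (1/2)^j) := by
    intro j
    rcases le_or_gt j N with hjN | hjN
    · rw [hvan j hjN a, hvan j hjN b, sub_self, norm_zero]
      positivity
    · -- j ≥ N+1
      obtain ⟨i, rfl⟩ : ∃ i, j = N + 1 + i := ⟨j - (N+1), by omega⟩
      have hbound := (p (N+1+i)).norm_image_sub_le (fun _ => a) (fun _ => b)
      rw [Fintype.card_fin] at hbound
      have hmax : max ‖(fun _ : Fin (N+1+i) => a)‖ ‖(fun _ : Fin (N+1+i) => b)‖ = m := by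
        have : Nonempty (Fin (N+1+i)) := ⟨⟨0, by omega⟩⟩
        rw [pi_norm_const, pi_norm_const]
      have hdiff : ‖(fun _ : Fin (N+1+i) => a) - (fun _ : Fin (N+1+i) => b)‖ = ‖a - b‖ := by
        have : Nonempty (Fin (N+1+i)) := ⟨⟨0, by omega⟩⟩
        have e : (fun _ : Fin (N+1+i) => a) - (fun _ : Fin (N+1+i) => b)
            = fun _ : Fin (N+1+i) => (a - b) := rfl
        rw [e, pi_norm_const]
      rw [hmax, hdiff] at hbound
      have hcard : (N+1+i) - 1 = N + i := by omega
      rw [hcard] at hbound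
      -- now estimate
      have h1 : ‖p (N+1+i)‖ ≤ C / (r₀:ℝ)^(N+1+i) := hcoef (N+1+i)
      have hmN : m ^ (N+i) ≤ m ^ N * ((r₀:ℝ)/2)^i := by
        rw [pow_add]
        apply mul_le_mul_of_nonneg_left _ (pow_nonneg hm0 N)
        exact pow_le_pow_left₀ hm0 hmlt.le i
      have hfinal : ‖p (N+1+i)‖ * (N+1+i) * m ^ (N+i) * ‖a - b‖
          ≤ K * ((N+1+i:ℕ):ℝ) * (1/2)^(N+1+i) := by
        have hstep : ‖p (N+1+i)‖ * m ^ (N+i)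
            ≤ (C / (r₀:ℝ)^(N+1+i)) * (m ^ N * ((r₀:ℝ)/2)^i) := by
          apply mul_le_mul h1 hmN (pow_nonneg hm0 _) (by positivity)
        have hkey : (C / (r₀:ℝ)^(N+1+i)) * (m ^ N * ((r₀:ℝ)/2)^i)
            = C * 2^(N+1) / (r₀:ℝ)^(N+1) * m ^ N * (1/2)^(N+1+i) := by
          rw [div_pow, pow_add, pow_add]
          field_simp
          have e1 : ((1:ℝ)/2)^N * 2^N = 1 := by rw [← mul_pow]; norm_num
          have e2 : ((1:ℝ)/2)^i * 2^i = 1 := by rw [← mul_pow]; norm_num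
          linear_combination (-(m^N) * ((1:ℝ)/2)^i * 2^i) * e1 - m^N * e2
        calc ‖p (N+1+i)‖ * (N+1+i) * m ^ (N+i) * ‖a - b‖
            = (‖p (N+1+i)‖ * m ^ (N+i)) * ((N+1+i:ℕ):ℝ) * ‖a - b‖ := by push_cast; ring
          _ ≤ ((C / (r₀:ℝ)^(N+1+i)) * (m ^ N * ((r₀:ℝ)/2)^i)) * ((N+1+i:ℕ):ℝ) * ‖a - b‖ := by
              apply mul_le_mul_of_nonneg_right _ (norm_nonneg _)
              apply mul_le_mul_of_nonneg_right hstep (by positivity)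
          _ = K * ((N+1+i:ℕ):ℝ) * (1/2)^(N+1+i) := by
              rw [hkey, hK]; push_cast; ring
      calc ‖p (N+1+i) (fun _ => a) - p (N+1+i) (fun _ => b)‖
          ≤ ‖p (N+1+i)‖ * (N+1+i) * m ^ (N+i) * ‖a - b‖ := by
            convert hbound using 2; push_cast; ring
        _ ≤ K * ((N+1+i:ℕ):ℝ) * (1/2)^(N+1+i) := hfinal
        _ = K * (((N+1+i:ℕ):ℝ) * (1/2)^(N+1+i)) := by ring
  -- sum up
  have hsumK : HasSum (fun j : ℕ => K * ((j:ℝ) * (1/2)^j)) (K * S) :=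
    hsummable.hasSum.mul_left K
  have := tsum_of_norm_bounded hsumK hterm
  rw [hsd.tsum_eq] at this
  calc ‖h a - h b‖ ≤ K * S := this
    _ = C * 2^(N+1) / (r₀:ℝ)^(N+1) * S * m ^ N * ‖a - b‖ := by rw [hK]; ring
    _ = C * 2^(N+1) / (r₀:ℝ)^(N+1) * S * max ‖a‖ ‖b‖ ^ N * ‖a - b‖ := by rw [hm]

set_option maxHeartbeats 1000000 in
/-- Normalization of a branched immersion near a branch point: if h is
real-analytic on the unit disk with h(z) = o(|z|^N), then there are r > 0 and
w : 𝔻_r → ℂ with w(z)^N = z^N + h(z), w(z) = z + o(|z|), w injective near 0,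
and an inverse g with g(w(z)) = z and g(u) = u + o(|u|). -/
theorem stmt13 (N : ℕ) (hN : 2 ≤ N) (h : ℂ → ℂ)
    (hA : AnalyticOnNhd ℝ h (Metric.ball 0 1))
    (ho : (fun z : ℂ => h z) =o[nhds (0 : ℂ)] fun z : ℂ => z ^ N) :
    ∃ r > (0 : ℝ), ∃ w : ℂ → ℂ,
      (∀ z : ℂ, ‖z‖ < r → w z ^ N = z ^ N + h z) ∧
      (fun z : ℂ => w z - z) =o[nhds (0 : ℂ)] (fun z : ℂ => z) ∧
      (∃ r' > (0 : ℝ), Set.InjOn w (Metric.ball 0 r')) ∧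
      ∃ g : ℂ → ℂ, (∀ z : ℂ, ‖z‖ < r → g (w z) = z) ∧
        (fun u : ℂ => g u - u) =o[nhds (0 : ℂ)] (fun u : ℂ => u) := by
  classical
  obtain ⟨M, rfl⟩ : ∃ M, N = M + 2 := ⟨N - 2, by omega⟩
  have hNpos : (0:ℝ) < (M+2:ℝ) := by positivity
  -- h 0 = 0
  have hh0 : h 0 = 0 := by
    have h1 := (ho.def one_pos).self_of_nhds
    simp only [zero_pow (by omega : M + 2 ≠ 0), norm_zero, one_mul] at h1
    exact norm_le_zero_iff.1 h1
  -- power series at 0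
  have hA0 : AnalyticAt ℝ h 0 := hA 0 (by simp)
  obtain ⟨p, hpat⟩ := hA0
  obtain ⟨ρ, hpb⟩ := id hpat
  have hvan := diag_vanish hpat (N := M+2) ho
  obtain ⟨r₀, hr₀pos, hr₀lt⟩ : ∃ r₀ : NNReal, 0 < r₀ ∧ (r₀ : ENNReal) < ρ := by
    rcases ENNReal.lt_iff_exists_nnreal_btwn.1 hpb.r_pos with ⟨r₀, h1, h2⟩
    exact ⟨r₀, by exact_mod_cast h1, h2⟩
  obtain ⟨Cl, hCl0, hlip⟩ := lip_bound hpb hr₀pos hr₀lt hvan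
  -- the construction
  set u : ℂ → ℂ := fun z => h z / z ^ (M+2) with hu
  set v : ℂ → ℂ := fun z => (1 + u z) ^ (((M+2:ℕ) : ℂ))⁻¹ with hv
  set w : ℂ → ℂ := fun z => z * v z with hw
  -- little-o of w - id
  have hu0 : Tendsto u (nhds 0) (nhds 0) := ho.tendsto_div_nhds_zero
  have hv1 : Tendsto v (nhds 0) (nhds 1) := by
    have hc : ContinuousAt (fun q : ℂ × ℂ => q.1 ^ q.2) (1, (((M+2:ℕ):ℂ))⁻¹) :=
      continuousAt_cpow (by simp [Complex.mem_slitPlane_iff])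
    have ht : Tendsto (fun z : ℂ => ((1 + u z, (((M+2:ℕ):ℂ))⁻¹) : ℂ × ℂ)) (nhds 0)
        (nhds ((1, (((M+2:ℕ):ℂ))⁻¹) : ℂ × ℂ)) := by
      refine Tendsto.prodMk_nhds ?_ tendsto_const_nhds
      simpa using tendsto_const_nhds.add hu0
    have := hc.tendsto.comp ht
    rw [hv]
    simpa [Complex.one_cpow, Function.comp_def] using this
  have hwo : (fun z : ℂ => w z - z) =o[nhds (0:ℂ)] fun z : ℂ => z := by
    have h1 : (fun z : ℂ => v z - 1) =o[nhds (0:ℂ)] (fun _ => (1:ℂ)) := by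
      rw [isLittleO_one_iff]
      simpa using hv1.sub (tendsto_const_nhds (x := (1:ℂ)))
    have h2 := (isBigO_refl (fun z : ℂ => z) (nhds 0)).mul_isLittleO h1
    have e : (fun z : ℂ => z * (v z - 1)) = fun z : ℂ => w z - z := by
      funext z; rw [hw]; ring
    rw [e] at h2
    simpa using h2
  -- radii
  set ε₀ : ℝ := (8*(M+2:ℝ)*(M+2:ℝ))⁻¹ with hε₀
  have hε₀pos : 0 < ε₀ := by positivity
  obtain ⟨δa, hδa0, hδa⟩ := Metric.eventually_nhds_iff.1 (ho.def (by norm_num : (0:ℝ) < 1/2))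
  obtain ⟨δb, hδb0, hδb⟩ := Metric.eventually_nhds_iff.1 (hwo.def hε₀pos)
  set r : ℝ := min (min δa δb) (min (min ((r₀:ℝ)/4) 1) ((M+2:ℝ)/(4*(Cl+1)))) with hr
  have hrpos : 0 < r := by
    have : (0:ℝ) < (r₀:ℝ) := hr₀pos
    have hCl1 : (0:ℝ) < Cl + 1 := by linarith
    refine lt_min (lt_min hδa0 hδb0) (lt_min (lt_min (by linarith) one_pos) (by positivity))
  -- basic bounds on ball r
  have hrδa : r ≤ δa := (min_le_left _ _).trans (min_le_left _ _)
  have hrδb : r ≤ δb := (min_le_left _ _).trans (min_le_right _ _)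
  have hrr₀ : r ≤ (r₀:ℝ)/4 := (min_le_right _ _).trans ((min_le_left _ _).trans (min_le_left _ _))
  have hrCl : r ≤ (M+2:ℝ)/(4*(Cl+1)) := (min_le_right _ _).trans (min_le_right _ _)
  have hhb : ∀ z : ℂ, ‖z‖ < r → ‖h z‖ ≤ 1/2 * ‖z‖^(M+2) := by
    intro z hz
    have := hδa (y := z) (by rw [dist_zero_right]; linarith)
    simpa [norm_pow] using this
  have hub : ∀ z : ℂ, ‖z‖ < r → ‖u z‖ ≤ 1/2 := by
    intro z hz
    by_cases hz0 : z = 0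
    · rw [hu]; simp [hz0, hh0]
    · have hzn : (0:ℝ) < ‖z‖^(M+2) := pow_pos (norm_pos_iff.2 hz0) _
      rw [hu]
      simp only [norm_div, norm_pow]
      rw [div_le_iff₀ hzn]
      simpa using hhb z hz
  have hone : ∀ z : ℂ, ‖z‖ < r → (1 + u z) ≠ 0 := by
    intro z hz H
    have : ‖u z‖ = 1 := by
      have : u z = -1 := by linear_combination H
      rw [this]; simp
    have := hub z hz
    linarith
  have hclose : ∀ z : ℂ, ‖z‖ < r → ‖w z - z‖ ≤ ε₀ * ‖z‖ := by
    intro z hz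
    have := hδb (y := z) (by rw [dist_zero_right]; linarith)
    simpa using this
  -- the equation
  have heqn : ∀ z : ℂ, ‖z‖ < r → w z ^ (M+2) = z ^ (M+2) + h z := by
    intro z hz
    by_cases hz0 : z = 0
    · rw [hz0, hw]
      simp [zero_pow (by omega : M + 2 ≠ 0), hh0]
    · have hzn : z ^ (M+2) ≠ 0 := pow_ne_zero _ hz0
      rw [hw, hv, mul_pow]
      rw [Complex.cpow_nat_inv_pow _ (by omega : M + 2 ≠ 0)]
      rw [hu]
      field_simp
  -- injectivity key
  have hr0R : (0:ℝ) < (r₀:ℝ) := hr₀pos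
  have key : ∀ a b : ℂ, ‖a‖ < r → ‖b‖ < r → ‖a‖ ≤ ‖b‖ → w a = w b → a = b := by
    intro a b ha hb hab hw'
    by_cases hb0 : b = 0
    · rw [hb0]
      rw [hb0, norm_zero] at hab
      exact norm_le_zero_iff.1 hab
    have hbpos : 0 < ‖b‖ := norm_pos_iff.2 hb0
    by_contra hne
    have habpos : 0 < ‖a - b‖ := by rw [norm_pos_iff]; exact sub_ne_zero.2 hne
    have heq2 : a^(M+2) - b^(M+2) = h b - h a := by
      have e1 := heqn a ha
      have e2 := heqn b hb
      rw [hw'] at e1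
      linear_combination e2 - e1
    have hab2 : ‖a - b‖ ≤ 2 * ε₀ * ‖b‖ := by
      have e : a - b = (a - w a) + (w b - b) := by rw [hw']; ring
      have c1 : ‖a - w a‖ ≤ ε₀ * ‖a‖ := by rw [norm_sub_rev]; exact hclose a ha
      have c2 : ‖w b - b‖ ≤ ε₀ * ‖b‖ := hclose b hb
      have c3 : ε₀ * ‖a‖ ≤ ε₀ * ‖b‖ := mul_le_mul_of_nonneg_left hab hε₀pos.le
      calc ‖a - b‖ = ‖(a - w a) + (w b - b)‖ := by rw [← e]
        _ ≤ ‖a - w a‖ + ‖w b - b‖ := norm_add_le _ _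
        _ ≤ 2 * ε₀ * ‖b‖ := by linarith
    set S := ∑ i ∈ Finset.range (M+2), a^i * b^(M+2-1-i) with hSdef
    have hgs : S * (a - b) = a^(M+2) - b^(M+2) := geom_sum₂_mul a b (M+2)
    have hterm : ∀ i ∈ Finset.range (M+2),
        ‖a^i * b^(M+2-1-i) - b^(M+1)‖ ≤ (M+2:ℝ) * ‖b‖^M * ‖a-b‖ := by
      intro i hi
      rw [Finset.mem_range] at hi
      have e2 : a^i * b^(M+2-1-i) - b^(M+1) = (a^i - b^i) * b^(M+1-i) := by
        rw [show (M+2) - 1 - i = (M+1) - i from by omega, sub_mul, ← pow_add,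
          show i + ((M+1) - i) = M+1 from by omega]
      rw [e2]
      rcases Nat.eq_zero_or_pos i with hi0 | hi0
      · subst hi0
        simp only [pow_zero, sub_self, zero_mul, norm_zero]
        positivity
      · have hb1 := pow_sub_pow_norm_le a b hab i
        rw [norm_mul, norm_pow]
        calc ‖a^i - b^i‖ * ‖b‖^(M+1-i)
            ≤ (i * ‖b‖^(i-1) * ‖a-b‖) * ‖b‖^(M+1-i) :=
              mul_le_mul_of_nonneg_right hb1 (by positivity)
          _ = i * (‖b‖^(i-1) * ‖b‖^(M+1-i)) * ‖a-b‖ := by ring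
          _ = i * ‖b‖^M * ‖a-b‖ := by
              rw [← pow_add, show (i-1) + ((M+1)-i) = M from by omega]
          _ ≤ (M+2:ℝ) * ‖b‖^M * ‖a-b‖ := by
              have hiM : (i:ℝ) ≤ (M+2:ℝ) := by exact_mod_cast (by omega : i ≤ M+2)
              apply mul_le_mul_of_nonneg_right
                (mul_le_mul_of_nonneg_right hiM (by positivity)) (norm_nonneg _)
    have hSsub : S - ((M+2:ℕ):ℂ) * b^(M+1)
        = ∑ i ∈ Finset.range (M+2), (a^i * b^(M+2-1-i) - b^(M+1)) := by
      rw [Finset.sum_sub_distrib, Finset.sum_const, Finset.card_range, nsmul_eq_mul, hSdef]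
    have hnorm1 : ‖((M+2:ℕ):ℂ) * b^(M+1)‖ = (M+2:ℝ) * ‖b‖^(M+1) := by
      rw [norm_mul, norm_pow, Complex.norm_natCast]
      push_cast
      ring
    have hsum : ‖S - ((M+2:ℕ):ℂ)*b^(M+1)‖ ≤ (M+2:ℝ)*((M+2:ℝ) * ‖b‖^M * ‖a-b‖) := by
      rw [hSsub]
      refine (norm_sum_le _ _).trans ?_
      refine (Finset.sum_le_sum hterm).trans ?_
      rw [Finset.sum_const, Finset.card_range, nsmul_eq_mul]
      push_cast
      exact le_of_eq (by ring)
    have hsmall : (M+2:ℝ)*((M+2:ℝ) * ‖b‖^M * ‖a-b‖) ≤ (1/4)*‖b‖^(M+1) := by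
      calc (M+2:ℝ)*((M+2:ℝ) * ‖b‖^M * ‖a-b‖)
          ≤ (M+2:ℝ)*((M+2:ℝ) * ‖b‖^M * (2 * ε₀ * ‖b‖)) := by gcongr
        _ = (2*(M+2:ℝ)*(M+2:ℝ)*ε₀) * (‖b‖^M * ‖b‖) := by ring
        _ = (1/4) * (‖b‖^M * ‖b‖) := by
            rw [hε₀]
            field_simp
            ring
        _ = (1/4)*‖b‖^(M+1) := by rw [← pow_succ]
    have hSlow : ((M+2:ℝ) - 1/4) * ‖b‖^(M+1) ≤ ‖S‖ := by
      have t := norm_sub_norm_le (((M+2:ℕ):ℂ) * b^(M+1)) S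
      rw [norm_sub_rev, hnorm1] at t
      linarith [hsum.trans hsmall]
    have hrb : ‖b‖ < (r₀:ℝ)/2 := by
      have : r ≤ (r₀:ℝ)/2 := hrr₀.trans (by linarith)
      linarith
    have hra : ‖a‖ < (r₀:ℝ)/2 := by
      have : r ≤ (r₀:ℝ)/2 := hrr₀.trans (by linarith)
      linarith
    have hup : ‖S‖ * ‖a-b‖ ≤ (Cl * ‖b‖) * ‖b‖^(M+1) * ‖a-b‖ := by
      have e3 : ‖S‖ * ‖a-b‖ = ‖a^(M+2) - b^(M+2)‖ := by rw [← norm_mul, hgs]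
      rw [e3, heq2]
      have hl := hlip b a hrb hra
      rw [max_eq_left hab, show ‖b - a‖ = ‖a - b‖ from norm_sub_rev b a] at hl
      calc ‖h b - h a‖ ≤ Cl * ‖b‖^(M+2) * ‖a-b‖ := hl
        _ = (Cl * ‖b‖) * ‖b‖^(M+1) * ‖a-b‖ := by rw [pow_succ]; ring
    have hClb : Cl * ‖b‖ ≤ (M+2:ℝ)/4 := by
      have h1 : ‖b‖ ≤ (M+2:ℝ)/(4*(Cl+1)) := le_of_lt (lt_of_lt_of_le hb hrCl)
      have h2 : Cl * ‖b‖ ≤ Cl * ((M+2:ℝ)/(4*(Cl+1))) := mul_le_mul_of_nonneg_left h1 hCl0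
      have h3 : Cl * ((M+2:ℝ)/(4*(Cl+1))) ≤ (M+2:ℝ)/4 := by
        rw [mul_div_assoc', div_le_div_iff₀ (by positivity) (by norm_num)]
        nlinarith
      linarith
    have hfin : ((M+2:ℝ) - 1/4) * ‖b‖^(M+1) * ‖a-b‖ ≤ ((M+2:ℝ)/4) * ‖b‖^(M+1) * ‖a-b‖ := by
      calc ((M+2:ℝ) - 1/4) * ‖b‖^(M+1) * ‖a-b‖ ≤ ‖S‖ * ‖a-b‖ :=
            mul_le_mul_of_nonneg_right hSlow (norm_nonneg _)
        _ ≤ (Cl*‖b‖)*‖b‖^(M+1)*‖a-b‖ := hup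
        _ ≤ ((M+2:ℝ)/4)*‖b‖^(M+1)*‖a-b‖ := by
            apply mul_le_mul_of_nonneg_right
              (mul_le_mul_of_nonneg_right hClb (by positivity)) (norm_nonneg _)
    have hposf : 0 < ‖b‖^(M+1) * ‖a-b‖ := mul_pos (pow_pos hbpos _) habpos
    have hX : ((M+2:ℝ) - 1/4) * (‖b‖^(M+1) * ‖a-b‖) ≤ ((M+2:ℝ)/4) * (‖b‖^(M+1) * ‖a-b‖) := by
      calc ((M+2:ℝ) - 1/4) * (‖b‖^(M+1) * ‖a-b‖)
          = ((M+2:ℝ) - 1/4) * ‖b‖^(M+1) * ‖a-b‖ := by ring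
        _ ≤ ((M+2:ℝ)/4) * ‖b‖^(M+1) * ‖a-b‖ := hfin
        _ = ((M+2:ℝ)/4) * (‖b‖^(M+1) * ‖a-b‖) := by ring
    have hcc : (M+2:ℝ) - 1/4 ≤ (M+2:ℝ)/4 := le_of_mul_le_mul_right hX hposf
    linarith
  have hinj : Set.InjOn w (Metric.ball 0 r) := by
    intro a ha b hb hab
    rw [Metric.mem_ball, dist_zero_right] at ha hb
    rcases le_total ‖a‖ ‖b‖ with hle | hle
    · exact key a b ha hb hle hab
    · exact (key b a hb ha hle hab.symm).symm
  -- the inverse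
  set g : ℂ → ℂ := fun q => if q ∈ w '' (Metric.ball 0 r) then
      Function.invFunOn w (Metric.ball 0 r) q else q with hg
  have hginv : ∀ z : ℂ, ‖z‖ < r → g (w z) = z := by
    intro z hz
    have hzmem : z ∈ Metric.ball (0:ℂ) r := by
      rw [Metric.mem_ball, dist_zero_right]; exact hz
    rw [hg]
    simp only [Set.mem_image]
    rw [if_pos ⟨z, hzmem, rfl⟩]
    exact hinj.leftInvOn_invFunOn hzmem
  have hgo : (fun q : ℂ => g q - q) =o[nhds (0:ℂ)] (fun q : ℂ => q) := by
    rw [isLittleO_iff]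
    intro c hc
    obtain ⟨δc, hδc0, hδc⟩ := Metric.eventually_nhds_iff.1 (hwo.def (by positivity : (0:ℝ) < c/2))
    have hδr : 0 < min r δc / 2 := by positivity
    filter_upwards [Metric.ball_mem_nhds (0:ℂ) hδr] with q hq
    rw [Metric.mem_ball, dist_zero_right] at hq
    by_cases hmem : q ∈ w '' (Metric.ball 0 r)
    · rw [hg]
      simp only
      rw [if_pos hmem]
      have hex : ∃ x ∈ Metric.ball (0:ℂ) r, w x = q := by
        rcases hmem with ⟨x, hx, hxe⟩; exact ⟨x, hx, hxe⟩
      set z := Function.invFunOn w (Metric.ball 0 r) q with hzdef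
      have hzmem : z ∈ Metric.ball (0:ℂ) r := Function.invFunOn_mem hex
      have hwz : w z = q := Function.invFunOn_eq hex
      rw [Metric.mem_ball, dist_zero_right] at hzmem
      have hcl := hclose z hzmem
      have hε₀half : ε₀ ≤ 1/2 := by
        rw [hε₀]
        have h2 : (2:ℝ) ≤ 8*(M+2:ℝ)*(M+2:ℝ) := by nlinarith
        calc (8*(M+2:ℝ)*(M+2:ℝ))⁻¹ ≤ (2:ℝ)⁻¹ := by
              apply inv_anti₀ (by norm_num) h2
          _ = 1/2 := by norm_num
      have hz2q : ‖z‖ ≤ 2 * ‖q‖ := by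
        have t1 : ‖z‖ - ‖w z‖ ≤ ‖z - w z‖ := norm_sub_norm_le z (w z)
        rw [norm_sub_rev] at t1
        have t2 : ε₀*‖z‖ ≤ (1/2)*‖z‖ := mul_le_mul_of_nonneg_right hε₀half (norm_nonneg _)
        have hnq : ‖w z‖ = ‖q‖ := by rw [hwz]
        linarith
      have hzδc : ‖z‖ < δc := by
        have t3 := min_le_right r δc
        calc ‖z‖ ≤ 2*‖q‖ := hz2q
          _ < 2*(min r δc/2) := by linarith
          _ ≤ δc := by linarith
      have hb2 := hδc (y := z) (by rw [dist_zero_right]; exact hzδc)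
      calc ‖z - q‖ = ‖w z - z‖ := by rw [← hwz, norm_sub_rev]
        _ ≤ c/2 * ‖z‖ := hb2
        _ ≤ c/2 * (2*‖q‖) := mul_le_mul_of_nonneg_left hz2q (by positivity)
        _ = c * ‖q‖ := by ring
    · rw [hg]
      simp only
      rw [if_neg hmem]
      simp only [sub_self, norm_zero]
      positivity
  refine ⟨r, hrpos, w, ?_, hwo, ⟨r, hrpos, hinj⟩, g, hginv, hgo⟩
  intro z hz
  exact heqn z (by exact hz)
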